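/- Let θ_1,…,θ_n ∈ [-π/2, π/2] be distinct with minimum separation τ', let θ ∈ [-π/2, π/2] with min_j |θ - θ_j| ≥ τ'/2, and let M > 0. Then for all complex â_1,…,â_n, ‖∑_{j=1}^n â_j φ_n(e^{iθ_j}) - M φ_n(e^{iθ})‖_2 ≥ (M/π^n) ∏_{j=1}^n |θ - θ_j| ≥ (M/π^n)(τ'/2)^n (n-1)!, where φ_n(ω) = (1, ω, ω², …, ω^n)^⊤ ∈ ℂ^{n+1}. -/

import Mathlib

open Real Complex Finset

section Aux
open Polynomial

lemma chord_eq (a b : ℝ) :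
    ‖Complex.exp (Complex.I * a) - Complex.exp (Complex.I * b)‖ =
      2 * |Real.sin ((a - b) / 2)| := by
  have key : Complex.exp (Complex.I * a) - Complex.exp (Complex.I * b) =
      Complex.exp ((((a + b) / 2 : ℝ)) * Complex.I) * (2 * Complex.I * Real.sin ((a - b) / 2)) := by
    have h1 : Complex.exp (Complex.I * a) =
        Complex.exp ((((a + b) / 2 : ℝ)) * Complex.I) * Complex.exp ((((a - b) / 2 : ℝ)) * Complex.I) := by
      rw [← Complex.exp_add]; congr 1; push_cast; ring
    have h2 : Complex.exp (Complex.I * b) =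
        Complex.exp ((((a + b) / 2 : ℝ)) * Complex.I) * Complex.exp ((-((a - b) / 2) : ℝ) * Complex.I) := by
      rw [← Complex.exp_add]; congr 1; push_cast; ring
    rw [h1, h2, ← mul_sub]
    congr 1
    rw [Complex.exp_mul_I, Complex.exp_mul_I]
    push_cast [← Complex.ofReal_sin]
    rw [Complex.cos_neg, Complex.sin_neg]
    push_cast
    ring
  rw [key, norm_mul, Complex.norm_exp_ofReal_mul_I, one_mul, norm_mul, norm_mul,
    Complex.norm_two, Complex.norm_I, Complex.norm_real, Real.norm_eq_abs, mul_one]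

lemma chord_ge (a b : ℝ) (h : |a - b| ≤ π) :
    (2 / π) * |a - b| ≤ ‖Complex.exp (Complex.I * a) - Complex.exp (Complex.I * b)‖ := by
  rw [chord_eq]
  have hπ := Real.pi_pos
  have h1 : |(a - b) / 2| ≤ π / 2 := by
    rw [abs_div, _root_.abs_two, div_le_div_iff₀ (by norm_num) (by norm_num)]; linarith
  have h2 : 2 / π * |(a - b) / 2| ≤ Real.sin |(a - b) / 2| :=
    Real.mul_le_sin (abs_nonneg _) h1
  have h3 : Real.sin |(a - b) / 2| ≤ |Real.sin ((a - b) / 2)| := by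
    rcases abs_choice ((a - b) / 2) with hc | hc <;> rw [hc]
    · exact le_abs_self _
    · rw [Real.sin_neg]; exact neg_le_abs _
  have h4 : |a - b| = 2 * |(a - b) / 2| := by rw [abs_div, _root_.abs_two]; ring
  rw [h4]; nlinarith [abs_nonneg ((a-b)/2)]

lemma sep_count : ∀ (k : ℕ) (S : Finset ℝ) (lo hi : ℝ), S.card = k + 1 →
    (∀ a ∈ S, ∀ b ∈ S, a ≠ b → 2 ≤ |a - b|) →
    (∀ a ∈ S, lo ≤ a ∧ a ≤ hi) → (2 * k : ℝ) ≤ hi - lo := by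
  intro k
  induction k with
  | zero =>
    intro S lo hi hc _ hb
    obtain ⟨a, ha⟩ := Finset.card_pos.mp (by omega : 0 < S.card)
    have := hb a ha; push_cast; linarith [this.1, this.2]
  | succ k ih =>
    intro S lo hi hc hsep hb
    have hne : S.Nonempty := Finset.card_pos.mp (by omega)
    set m := S.max' hne with hm
    have hmS : m ∈ S := S.max'_mem hne
    have h1 : (2 * k : ℝ) ≤ (m - 2) - lo := by
      apply ih (S.erase m) lo (m - 2)
      · rw [Finset.card_erase_of_mem hmS, hc]; omega
      · intro a ha b hb' hab
        exact hsep a (Finset.mem_of_mem_erase ha) b (Finset.mem_of_mem_erase hb') hab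
      · intro a ha
        have haS := Finset.mem_of_mem_erase ha
        have hane : a ≠ m := Finset.ne_of_mem_erase ha
        have hle : a ≤ m := S.le_max' a haS
        have h2 := hsep a haS m hmS hane
        rw [abs_sub_comm, _root_.abs_of_nonneg (by linarith)] at h2
        exact ⟨(hb a haS).1, by linarith⟩
    have := (hb m hmS).2
    push_cast; linarith

lemma prod_max_factorial : ∀ n : ℕ, ∏ k ∈ Finset.range (n + 1), max (1:ℝ) (k:ℝ) =
    Nat.factorial n := by
  intro n
  induction n with
  | zero => simp
  | succ n ih =>
    rw [Finset.prod_range_succ, ih]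
    rw [max_eq_right (by push_cast; linarith [Nat.cast_nonneg (α := ℝ) n])]
    rw [Nat.factorial_succ]
    push_cast; ring

lemma prod_lower (n : ℕ) (hn : 1 ≤ n) (θ : Fin n → ℝ) (hinj : Function.Injective θ)
    (τ' : ℝ) (hτ' : 0 < τ') (hsep : ∀ j l : Fin n, j ≠ l → τ' ≤ |θ j - θ l|) (θ0 : ℝ)
    (hfar : ∀ j, τ' / 2 ≤ |θ0 - θ j|) :
    (τ' / 2) ^ n * (Nat.factorial (n - 1)) ≤ ∏ j : Fin n, |θ0 - θ j| := by
  set h : ℝ := τ' / 2 with hh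
  have hpos : 0 < h := by positivity
  set e : Fin n → ℝ := fun j => (θ0 - θ j) / h with he
  have habs : ∀ j, |θ0 - θ j| = h * |e j| := by
    intro j
    rw [he]; simp only []
    rw [abs_div, _root_.abs_of_pos hpos, mul_div_cancel₀ _ (ne_of_gt hpos)]
  have he1 : ∀ j, 1 ≤ |e j| := by
    intro j
    have := hfar j
    rw [habs j] at this
    rw [← mul_le_mul_iff_right₀ hpos, mul_one]
    linarith
  have hesep : ∀ j l : Fin n, j ≠ l → 2 ≤ |e j - e l| := by
    intro j l hjl
    have hd : e j - e l = (θ l - θ j) / h := by simp only [he]; ring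
    rw [hd, abs_div, _root_.abs_of_pos hpos, le_div_iff₀ hpos]
    have := hsep l j (Ne.symm hjl)
    rw [hh]; linarith
  have heinj : Function.Injective e := by
    intro a b hab
    have h3 : (θ0 - θ a) / h * h = (θ0 - θ b) / h * h := by rw [show (θ0 - θ a) / h = e a from rfl, show (θ0 - θ b) / h = e b from rfl, hab]
    rw [div_mul_cancel₀ _ (ne_of_gt hpos), div_mul_cancel₀ _ (ne_of_gt hpos)] at h3
    exact hinj (by linarith)
  set f : Fin n → ℝ := fun j => |e j| with hf
  set σ := Tuple.sort f with hσ
  have mono := Tuple.monotone_sort f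
  have key : ∀ k : Fin n, max (1:ℝ) ((k : ℕ) : ℝ) ≤ f (σ k) := by
    intro k
    rw [max_le_iff]
    refine ⟨he1 _, ?_⟩
    set r := f (σ k) with hr
    have hcount : (2 * (k : ℕ) : ℝ) ≤ r - (-r) := by
      apply sep_count (k : ℕ) ((Finset.Iic k).image (e ∘ σ)) (-r) r
      · rw [Finset.card_image_of_injective _ (heinj.comp σ.injective), Fin.card_Iic]
      · intro a ha b hb hab
        simp only [Finset.mem_image] at ha hb
        obtain ⟨i, _, rfl⟩ := ha
        obtain ⟨j, _, rfl⟩ := hb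
        exact hesep (σ i) (σ j) (fun hc => hab (by simp only [Function.comp_apply, hc]))
      · intro a ha
        simp only [Finset.mem_image, Finset.mem_Iic] at ha
        obtain ⟨i, hik, rfl⟩ := ha
        have : f (σ i) ≤ r := mono hik
        rw [hf] at this
        simp only [Function.comp_apply]
        constructor
        · linarith [neg_abs_le (e (σ i))]
        · linarith [le_abs_self (e (σ i))]
    linarith
  have hprodeq : ∏ j : Fin n, f j = ∏ k : Fin n, f (σ k) := (Equiv.prod_comp σ f).symm
  have hprodge : ∏ k : Fin n, max (1:ℝ) ((k : ℕ) : ℝ) ≤ ∏ k : Fin n, f (σ k) := by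
    apply Finset.prod_le_prod
    · intro i _; positivity
    · intro i _; exact key i
  have hfact : ∏ k : Fin n, max (1:ℝ) ((k : ℕ) : ℝ) = Nat.factorial (n - 1) := by
    rw [Fin.prod_univ_eq_prod_range (fun k => max (1:ℝ) (k : ℝ)) n]
    obtain ⟨m, rfl⟩ : ∃ m, n = m + 1 := ⟨n - 1, by omega⟩
    rw [prod_max_factorial m]
    simp
  calc (τ' / 2) ^ n * (Nat.factorial (n - 1))
      = h ^ n * ∏ k : Fin n, max (1:ℝ) ((k : ℕ) : ℝ) := by rw [hfact]
    _ ≤ h ^ n * ∏ k : Fin n, f (σ k) := by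
        apply mul_le_mul_of_nonneg_left hprodge (by positivity)
    _ = h ^ n * ∏ j : Fin n, f j := by rw [hprodeq]
    _ = ∏ j : Fin n, |θ0 - θ j| := by
        rw [Finset.prod_congr rfl (fun j _ => habs j), Finset.prod_mul_distrib]
        simp [Finset.prod_const, Finset.card_univ]
        exact Or.inl rfl

lemma coeff_abs_le (n : ℕ) (ω : Fin n → ℂ) (hω : ∀ j, ‖ω j‖ = 1) (i : ℕ) (hi : i ≤ n) :
    ‖(∏ j : Fin n, (X - C (ω j))).coeff i‖ ≤ (n.choose (n - i) : ℝ) := by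
  have hcard : Multiset.card (Finset.univ.val.map ω) = n := by simp
  have hp : (∏ j : Fin n, (X - C (ω j))) = ((Finset.univ.val.map ω).map (fun t => X - C t)).prod := by
    rw [Multiset.map_map]; rfl
  rw [hp, Multiset.prod_X_sub_C_coeff _ (by rw [hcard]; exact hi), hcard]
  rw [norm_mul, norm_pow]
  simp only [norm_neg, norm_one, one_pow, one_mul]
  rw [Finset.esymm_map_val]
  refine le_trans (norm_sum_le _ _) ?_
  have : ∀ t ∈ Finset.univ.powersetCard (n - i), ‖t.prod ω‖ = 1 := by
    intro t _
    rw [show t.prod ω = ∏ x ∈ t, ω x from rfl, norm_prod]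
    exact Finset.prod_eq_one (fun x _ => hω x)
  rw [Finset.sum_congr rfl this, Finset.sum_const, Finset.card_powersetCard, Finset.card_univ,
    Fintype.card_fin]
  simp

lemma norm_lower (n : ℕ) (ω : Fin n → ℂ) (hω : ∀ j, ‖ω j‖ = 1)
    (ω0 : ℂ) (M : ℝ) (hM : 0 ≤ M) (ahat : Fin n → ℂ) :
    M * ∏ j : Fin n, ‖ω0 - ω j‖ ≤
      2 ^ n * Real.sqrt (∑ i : Fin (n + 1),
        (‖(∑ j : Fin n, ahat j * (ω j) ^ (i : ℕ)) - M * ω0 ^ (i : ℕ)‖) ^ 2) := by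
  set p := ∏ j : Fin n, (X - C (ω j)) with hpdef
  have hdeg : p.natDegree = n := by
    rw [hpdef, natDegree_prod _ _ (fun j _ => X_sub_C_ne_zero _)]
    simp [natDegree_X_sub_C]
  have evalA : ∀ x : ℂ, p.eval x = ∑ i : Fin (n+1), p.coeff i * x ^ (i:ℕ) := by
    intro x
    rw [eval_eq_sum_range' (by rw [hdeg]; omega : p.natDegree < n+1)]
    rw [Fin.sum_univ_eq_sum_range (fun i => p.coeff i * x ^ i) (n+1)]
  have hroot : ∀ j, p.eval (ω j) = 0 := by
    intro j
    rw [hpdef, eval_prod]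
    apply Finset.prod_eq_zero (Finset.mem_univ j)
    simp
  have heval0 : ‖p.eval ω0‖ = ∏ j : Fin n, ‖ω0 - ω j‖ := by
    rw [hpdef, eval_prod, norm_prod]
    simp
  set v : Fin (n+1) → ℂ := fun i => (∑ j : Fin n, ahat j * ω j ^ (i:ℕ)) - M * ω0 ^ (i:ℕ) with hvdef
  have hkey : ∑ i : Fin (n+1), p.coeff i * v i = -((M:ℂ) * p.eval ω0) := by
    have e1 : ∀ i : Fin (n+1), p.coeff (i:ℕ) * v i =
        (∑ j : Fin n, ahat j * (p.coeff (i:ℕ) * ω j ^ (i:ℕ))) - p.coeff (i:ℕ) * ((M:ℂ) * ω0 ^ (i:ℕ)) := by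
      intro i
      simp only [hvdef]
      rw [mul_sub, Finset.mul_sum]
      congr 1
      exact Finset.sum_congr rfl (fun j _ => by ring)
    rw [Finset.sum_congr rfl (fun i _ => e1 i), Finset.sum_sub_distrib, Finset.sum_comm]
    have e2 : ∀ j : Fin n, (∑ i : Fin (n+1), ahat j * (p.coeff (i:ℕ) * ω j ^ (i:ℕ))) = 0 := by
      intro j
      have : ∑ i : Fin (n+1), ahat j * (p.coeff (i:ℕ) * ω j ^ (i:ℕ))
          = ahat j * ∑ i : Fin (n+1), p.coeff (i:ℕ) * ω j ^ (i:ℕ) := by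
        rw [Finset.mul_sum]
      rw [this, ← evalA, hroot]
      ring
    rw [Finset.sum_congr rfl (fun j _ => e2 j), Finset.sum_const_zero, zero_sub]
    have e3 : ∑ i : Fin (n+1), p.coeff (i:ℕ) * ((M:ℂ) * ω0 ^ (i:ℕ)) = (M:ℂ) * p.eval ω0 := by
      rw [evalA, Finset.mul_sum]
      exact Finset.sum_congr rfl (fun i _ => by ring)
    rw [e3]
  have cs := Finset.sum_mul_sq_le_sq_mul_sq Finset.univ
    (fun i : Fin (n+1) => ‖p.coeff i‖) (fun i => ‖v i‖)
  have habs : M * ‖p.eval ω0‖ ≤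
      ∑ i : Fin (n+1), ‖p.coeff i‖ * ‖v i‖ := by
    have h1 : M * ‖p.eval ω0‖ = ‖∑ i : Fin (n+1), p.coeff i * v i‖ := by
      rw [hkey, norm_neg, norm_mul, Complex.norm_real, Real.norm_eq_abs, _root_.abs_of_nonneg hM]
    rw [h1]
    refine le_trans (norm_sum_le _ _) (le_of_eq ?_)
    exact Finset.sum_congr rfl (fun i _ => norm_mul _ _)
  have hc1 : ∑ i : Fin (n+1), ‖p.coeff i‖ ≤ (2:ℝ)^n := by
    calc ∑ i : Fin (n+1), ‖p.coeff i‖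
        ≤ ∑ i : Fin (n+1), (n.choose (n - (i:ℕ)) : ℝ) :=
          Finset.sum_le_sum (fun i _ => coeff_abs_le n ω hω i (by omega))
      _ = (2:ℝ)^n := by
          rw [Fin.sum_univ_eq_sum_range (fun i => (n.choose (n - i) : ℝ)) (n+1)]
          rw [← Nat.cast_sum]
          have : ∑ i ∈ Finset.range (n+1), n.choose (n - i) = 2^n := by
            have hr := Finset.sum_range_reflect (fun i => n.choose i) (n+1)
            simp only [Nat.add_sub_cancel] at hr
            rw [hr, Nat.sum_range_choose]
          rw [this]
          push_cast
          ring
  have hc2 : ∑ i : Fin (n+1), (‖p.coeff i‖)^2 ≤ ((2:ℝ)^n)^2 := by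
    refine le_trans (Finset.sum_sq_le_sq_sum_of_nonneg (fun i _ => norm_nonneg _)) ?_
    have h0 : (0:ℝ) ≤ ∑ i : Fin (n+1), ‖p.coeff i‖ :=
      Finset.sum_nonneg (fun i _ => norm_nonneg _)
    nlinarith
  set B := ∑ i : Fin (n+1), (‖v i‖)^2 with hB
  have hBnn : 0 ≤ B := Finset.sum_nonneg (fun i _ => sq_nonneg _)
  have hnn : 0 ≤ M * ‖p.eval ω0‖ := mul_nonneg hM (norm_nonneg _)
  have hsq : (M * ‖p.eval ω0‖)^2 ≤ ((2:ℝ)^n)^2 * B := by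
    have hsum_nn : 0 ≤ ∑ i : Fin (n+1), ‖p.coeff i‖ * ‖v i‖ :=
      Finset.sum_nonneg (fun i _ => mul_nonneg (norm_nonneg _) (norm_nonneg _))
    have h2 : (M * ‖p.eval ω0‖)^2 ≤
        (∑ i : Fin (n+1), ‖p.coeff i‖ * ‖v i‖)^2 := by
      apply pow_le_pow_left₀ hnn habs
    refine le_trans h2 (le_trans cs ?_)
    exact mul_le_mul_of_nonneg_right hc2 hBnn
  have final : M * ‖p.eval ω0‖ ≤ 2^n * Real.sqrt B := by
    have := Real.sqrt_le_sqrt hsq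
    rwa [Real.sqrt_sq hnn, Real.sqrt_mul (sq_nonneg _), Real.sqrt_sq (by positivity)] at this
  rw [← heval0]
  exact final

end Aux

theorem stmt_19 (n : ℕ) (hn : 1 ≤ n) (M : ℝ) (hM : 0 < M)
    (θ : Fin n → ℝ) (hθ : ∀ j, θ j ∈ Set.Icc (-(π / 2)) (π / 2))
    (hinj : Function.Injective θ)
    (τ' : ℝ) (hτ' : 0 < τ')
    (hsep : ∀ j l : Fin n, j ≠ l → τ' ≤ |θ j - θ l|)
    (θ0 : ℝ) (hθ0 : θ0 ∈ Set.Icc (-(π / 2)) (π / 2))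
    (hfar : ∀ j, τ' / 2 ≤ |θ0 - θ j|)
    (ahat : Fin n → ℂ) :
    (M / π ^ n) * (τ' / 2) ^ n * (Nat.factorial (n - 1)) ≤
        (M / π ^ n) * ∏ j : Fin n, |θ0 - θ j| ∧
      (M / π ^ n) * ∏ j : Fin n, |θ0 - θ j| ≤
        Real.sqrt (∑ i : Fin (n + 1),
          (‖(∑ j : Fin n, ahat j * (Complex.exp (Complex.I * θ j)) ^ (i : ℕ))
            - M * (Complex.exp (Complex.I * θ0)) ^ (i : ℕ)‖) ^ 2) := by
  have hπ := Real.pi_pos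
  have hMπ : 0 ≤ M / π ^ n := by positivity
  constructor
  · rw [mul_assoc]
    exact mul_le_mul_of_nonneg_left
      (prod_lower n hn θ hinj τ' hτ' hsep θ0 hfar) hMπ
  · set ω : Fin n → ℂ := fun j => Complex.exp (Complex.I * θ j) with hωdef
    set ω0 : ℂ := Complex.exp (Complex.I * θ0) with hω0def
    have hω : ∀ j, ‖ω j‖ = 1 := by
      intro j
      rw [hωdef]
      simpa [mul_comm] using Complex.norm_exp_ofReal_mul_I (θ j)
    have hNL := norm_lower n ω hω ω0 M hM.le ahat
    have hchord : (2 / π) ^ n * ∏ j : Fin n, |θ0 - θ j| ≤ ∏ j : Fin n, ‖ω0 - ω j‖ := by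
      have hrw : (2 / π) ^ n * ∏ j : Fin n, |θ0 - θ j|
          = ∏ j : Fin n, (2 / π) * |θ0 - θ j| := by
        rw [Finset.prod_mul_distrib, Finset.prod_const, Finset.card_univ, Fintype.card_fin]
      rw [hrw]
      apply Finset.prod_le_prod
      · intro j _; positivity
      · intro j _
        apply chord_ge
        have h1 := hθ0.1; have h2 := hθ0.2
        have h3 := (hθ j).1; have h4 := (hθ j).2
        rw [abs_le]; constructor <;> linarith
    have hchain : (2:ℝ)^n * ((M / π ^ n) * ∏ j : Fin n, |θ0 - θ j|) ≤
        (2:ℝ)^n * Real.sqrt (∑ i : Fin (n + 1),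
          (‖(∑ j : Fin n, ahat j * (ω j) ^ (i : ℕ)) - M * ω0 ^ (i : ℕ)‖) ^ 2) := by
      refine le_trans ?_ hNL
      have heq : (2:ℝ)^n * ((M / π ^ n) * ∏ j : Fin n, |θ0 - θ j|)
          = M * ((2 / π) ^ n * ∏ j : Fin n, |θ0 - θ j|) := by
        rw [div_pow]
        field_simp
      rw [heq]
      exact mul_le_mul_of_nonneg_left hchord hM.le
    have h2n : (0:ℝ) < 2^n := by positivity
    have := le_of_mul_le_mul_left hchain h2n
    convert this using 4
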